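/- Let R be a ring, let M be a right R-module of finite length, and let N ⊆ M be an isotypic submodule. Then there exists a submodule N' of M with N ⊆ N' such that N' is isotypic, N' is maximal among the isotypic submodules of M, and Hom_R(N', M/N') = {0}. -/

import Mathlib

universe u

open CategoryTheory

/-- `Ext¹_A(S, T) = 0`, formulated via the `Ext` functor on the category of `A`-modules.
Right `R`-modules are treated as modules over `A = Rᵐᵒᵖ`. -/
def Ext1IsZero (A : Type u) [Ring A] (S T : Type u) [AddCommGroup S] [Module A S]
    [AddCommGroup T] [Module A T] : Prop :=
  Subsingleton (((Ext ℤ (ModuleCat.{u} A) 1).obj (Opposite.op (ModuleCat.of A S))).obj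
    (ModuleCat.of A T))

/-- The endomorphism ring of the `A`-module `M` is a division ring:
it is nontrivial and every nonzero endomorphism is invertible. -/
def EndIsDivisionRing (A : Type*) [Ring A] (M : Type*) [AddCommGroup M] [Module A M] : Prop :=
  Nontrivial (Module.End A M) ∧ ∀ f : Module.End A M, f ≠ 0 → IsUnit f

/-- The `A`-module `M` is isotypic: all of its simple subquotients are isomorphic. -/
def IsIsotypicSubquot (A : Type*) [Ring A] (M : Type*) [AddCommGroup M] [Module A M] : Prop :=
  ∀ (p₁ p₂ : Submodule A M) (q₁ : Submodule A p₁) (q₂ : Submodule A p₂),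
    IsSimpleModule A (p₁ ⧸ q₁) → IsSimpleModule A (p₂ ⧸ q₂) →
      Nonempty ((p₁ ⧸ q₁) ≃ₗ[A] (p₂ ⧸ q₂))

/-- `X` is a subquotient of `W`. -/
def SQ (A : Type u) [Ring A] (W : Type u) [AddCommGroup W] [Module A W]
    (X : Type u) [AddCommGroup X] [Module A X] : Prop :=
  ∃ (p : Submodule A W) (q : Submodule A p), Nonempty (X ≃ₗ[A] (p ⧸ q))

section SQLemmas

variable {A : Type u} [Ring A]

lemma sq_refl (W : Type u) [AddCommGroup W] [Module A W] : SQ A W W :=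
  ⟨⊤, ⊥, ⟨Submodule.topEquiv.symm.trans (Submodule.quotEquivOfEqBot ⊥ rfl).symm⟩⟩

lemma sq_congr {W X Y : Type u} [AddCommGroup W] [Module A W] [AddCommGroup X] [Module A X]
    [AddCommGroup Y] [Module A Y] (e : X ≃ₗ[A] Y) (h : SQ A W X) : SQ A W Y := by
  obtain ⟨p, q, ⟨f⟩⟩ := h
  exact ⟨p, q, ⟨e.symm.trans f⟩⟩

lemma sq_of_surjective {U V X : Type u} [AddCommGroup U] [Module A U] [AddCommGroup V]
    [Module A V] [AddCommGroup X] [Module A X] (g : U →ₗ[A] V) (hg : Function.Surjective g)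
    (h : SQ A V X) : SQ A U X := by
  obtain ⟨p, q, ⟨e⟩⟩ := h
  have hres : ∀ x ∈ p.comap g, g x ∈ p := fun x hx => hx
  set g' : (p.comap g : Type u) →ₗ[A] p := g.restrict hres with hg'def
  set h2 : (p.comap g : Type u) →ₗ[A] (p ⧸ q) := q.mkQ.comp g' with hh2
  have hsurj : Function.Surjective h2 := by
    intro y
    obtain ⟨z, rfl⟩ := Submodule.mkQ_surjective q y
    obtain ⟨x, hx⟩ := hg z.1
    have hxm : x ∈ p.comap g := by
      show g x ∈ p
      rw [hx]; exact z.2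
    refine ⟨⟨x, hxm⟩, ?_⟩
    show q.mkQ (g' ⟨x, hxm⟩) = q.mkQ z
    congr 1
    exact Subtype.ext hx
  exact ⟨p.comap g, LinearMap.ker h2, ⟨e.trans (h2.quotKerEquivOfSurjective hsurj).symm⟩⟩

lemma sq_of_injective {U V X : Type u} [AddCommGroup U] [Module A U] [AddCommGroup V]
    [Module A V] [AddCommGroup X] [Module A X] (g : U →ₗ[A] V) (hg : Function.Injective g)
    (h : SQ A U X) : SQ A V X := by
  obtain ⟨p, q, ⟨e⟩⟩ := h
  let eP := Submodule.equivMapOfInjective g hg p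
  exact ⟨p.map g, q.map (eP : p →ₗ[A] p.map g),
    ⟨e.trans (Submodule.Quotient.equiv q (q.map (eP : p →ₗ[A] p.map g)) eP rfl)⟩⟩

lemma sq_cases {W X : Type u} [AddCommGroup W] [Module A W] [AddCommGroup X] [Module A X]
    (K : Submodule A W) (hX : IsSimpleModule A X) (h : SQ A W X) :
    SQ A K X ∨ SQ A (W ⧸ K) X := by
  obtain ⟨p, q, ⟨e⟩⟩ := h
  haveI : IsSimpleModule A X := hX
  haveI : IsSimpleModule A (p ⧸ q) := IsSimpleModule.congr e.symm
  set K' : Submodule A p := K.comap p.subtype with hK'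
  have hXpq : SQ A (p ⧸ q) X := sq_congr e.symm (sq_refl _)
  rcases eq_bot_or_eq_top (K'.map q.mkQ) with hbot | htop
  · right
    have hK'q : K' ≤ q := by
      intro x hx
      have hmem : q.mkQ x ∈ K'.map q.mkQ := Submodule.mem_map_of_mem hx
      rw [hbot, Submodule.mem_bot] at hmem
      rwa [Submodule.mkQ_apply, Submodule.Quotient.mk_eq_zero] at hmem
    set g : (p : Type u) →ₗ[A] (W ⧸ K) := K.mkQ.comp p.subtype with hg
    have hker : LinearMap.ker g = K' := by
      ext x
      simp only [hg, LinearMap.mem_ker, LinearMap.comp_apply, Submodule.subtype_apply,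
        Submodule.mkQ_apply, Submodule.Quotient.mk_eq_zero, hK', Submodule.mem_comap]
    have hle : LinearMap.ker g ≤ q.comap (LinearMap.id : (p : Type u) →ₗ[A] p) := by
      rw [hker, Submodule.comap_id]; exact hK'q
    set ψ : ((p : Type u) ⧸ LinearMap.ker g) →ₗ[A] ((p : Type u) ⧸ q) :=
      Submodule.mapQ (LinearMap.ker g) q LinearMap.id hle with hψdef
    have hψ : Function.Surjective ψ := by
      intro y
      obtain ⟨x, rfl⟩ := Submodule.mkQ_surjective q y
      exact ⟨(LinearMap.ker g).mkQ x, by simp [hψdef, Submodule.mapQ_apply]⟩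
    have hφ : Function.Surjective
        (ψ.comp (g.quotKerEquivRange.symm : (LinearMap.range g : Type u) →ₗ[A] _)) :=
      hψ.comp g.quotKerEquivRange.symm.surjective
    have h1 : SQ A (LinearMap.range g : Type u) X := sq_of_surjective _ hφ hXpq
    exact sq_of_injective (LinearMap.range g).subtype (Submodule.injective_subtype _) h1
  · left
    set j : (K' : Type u) →ₗ[A] K :=
      LinearMap.codRestrict K ((p.subtype).domRestrict K') (fun x => x.2) with hj
    have hjinj : Function.Injective j := by
      intro a b hab
      have h1 : (j a).1 = (j b).1 := congrArg Subtype.val hab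
      exact Subtype.ext (Subtype.ext h1)
    set s : (K' : Type u) →ₗ[A] (p ⧸ q) := q.mkQ.comp K'.subtype with hs
    have hssurj : Function.Surjective s := by
      rw [← LinearMap.range_eq_top, hs, LinearMap.range_comp, Submodule.range_subtype]
      exact htop
    exact sq_of_injective j hjinj (sq_of_surjective s hssurj hXpq)

end SQLemmas

/-- If `M` is a right `R`-module of finite length and `N ⊆ M` is an
isotypic submodule, then there is a submodule `N' ⊇ N` that is isotypic, maximal among the
isotypic submodules of `M`, and satisfies `Hom_R(N', M/N') = 0`. -/
theorem exists_maximal_isotypic_submodule (R : Type u) [Ring R]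
    (M : Type u) [AddCommGroup M] [Module Rᵐᵒᵖ M] (hfl : IsFiniteLength Rᵐᵒᵖ M)
    (N : Submodule Rᵐᵒᵖ M) (hN : IsIsotypicSubquot Rᵐᵒᵖ N) :
    ∃ N' : Submodule Rᵐᵒᵖ M, N ≤ N' ∧ IsIsotypicSubquot Rᵐᵒᵖ N' ∧
      (∀ P : Submodule Rᵐᵒᵖ M, IsIsotypicSubquot Rᵐᵒᵖ P → N' ≤ P → P = N') ∧
      (∀ f : N' →ₗ[Rᵐᵒᵖ] (M ⧸ N'), f = 0) := by
  classical
  haveI hNoeth : IsNoetherian Rᵐᵒᵖ M := (isFiniteLength_iff_isNoetherian_isArtinian.mp hfl).1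
  set s : Set (Submodule Rᵐᵒᵖ M) := {P | N ≤ P ∧ IsIsotypicSubquot Rᵐᵒᵖ P} with hs
  obtain ⟨N', hN's, hmax⟩ :=
    set_has_maximal_iff_noetherian.mpr hNoeth s ⟨N, le_refl N, hN⟩
  obtain ⟨hNN', hiso⟩ := hN's
  have hmax' : ∀ P : Submodule Rᵐᵒᵖ M, IsIsotypicSubquot Rᵐᵒᵖ P → N' ≤ P → P = N' := by
    intro P hP hle
    by_contra hne
    exact hmax P ⟨hNN'.trans hle, hP⟩ (lt_of_le_of_ne hle (Ne.symm hne))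
  refine ⟨N', hNN', hiso, hmax', ?_⟩
  intro f
  by_contra hf
  set P : Submodule Rᵐᵒᵖ M := (LinearMap.range f).comap N'.mkQ with hPdef
  have hN'P : N' ≤ P := by
    intro x hx
    show N'.mkQ x ∈ LinearMap.range f
    have hz : N'.mkQ x = 0 := by
      rw [Submodule.mkQ_apply, Submodule.Quotient.mk_eq_zero]; exact hx
    rw [hz]; exact zero_mem _
  have hne : P ≠ N' := by
    intro hPN
    apply hf
    ext y
    obtain ⟨x, hx⟩ := Submodule.mkQ_surjective N' (f y)
    have hxP : x ∈ P := by
      show N'.mkQ x ∈ LinearMap.range f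
      rw [hx]; exact ⟨y, rfl⟩
    rw [hPN] at hxP
    have hz : N'.mkQ x = 0 := by
      rw [Submodule.mkQ_apply, Submodule.Quotient.mk_eq_zero]; exact hxP
    rw [LinearMap.zero_apply, ← hx]; exact hz
  -- `P ⧸ K` is isomorphic to `range f`, which is a quotient of `N'`
  set K : Submodule Rᵐᵒᵖ P := N'.comap P.subtype with hK
  set g' : (P : Type u) →ₗ[Rᵐᵒᵖ] (LinearMap.range f : Type u) :=
    LinearMap.codRestrict (LinearMap.range f) (N'.mkQ.comp P.subtype) (fun x => x.2) with hg'
  have hg'surj : Function.Surjective g' := by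
    rintro ⟨y, hy⟩
    obtain ⟨x, hx⟩ := Submodule.mkQ_surjective N' y
    have hxP : x ∈ P := by
      show N'.mkQ x ∈ LinearMap.range f
      rw [hx]; exact hy
    exact ⟨⟨x, hxP⟩, Subtype.ext hx⟩
  have hkerg' : LinearMap.ker g' = K := by
    ext x
    simp only [hg', LinearMap.ker_codRestrict, LinearMap.mem_ker, LinearMap.comp_apply,
      Submodule.subtype_apply, Submodule.mkQ_apply, Submodule.Quotient.mk_eq_zero,
      hK, Submodule.mem_comap, Subtype.ext_iff, LinearMap.codRestrict_apply,
      ZeroMemClass.coe_zero]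
    exact Submodule.Quotient.mk_eq_zero N'
  have eqv : ((P : Type u) ⧸ K) ≃ₗ[Rᵐᵒᵖ] (LinearMap.range f : Type u) :=
    (Submodule.quotEquivOfEq K (LinearMap.ker g') hkerg'.symm).trans
      (g'.quotKerEquivOfSurjective hg'surj)
  have key : ∀ (X : Type u) [AddCommGroup X] [Module Rᵐᵒᵖ X], IsSimpleModule Rᵐᵒᵖ X →
      SQ Rᵐᵒᵖ P X → SQ Rᵐᵒᵖ N' X := by
    intro X _ _ hX hSQ
    rcases sq_cases K hX hSQ with h | h
    · exact sq_of_injective (Submodule.comapSubtypeEquivOfLe hN'P).toLinearMap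
        (Submodule.comapSubtypeEquivOfLe hN'P).injective h
    · have h2 : SQ Rᵐᵒᵖ (LinearMap.range f : Type u) X :=
        sq_of_injective eqv.toLinearMap eqv.injective h
      exact sq_of_surjective f.rangeRestrict f.surjective_rangeRestrict h2
  have hPiso : IsIsotypicSubquot Rᵐᵒᵖ P := by
    intro p₁ p₂ q₁ q₂ h₁ h₂
    obtain ⟨a₁, b₁, ⟨e₁⟩⟩ := key _ h₁ ⟨p₁, q₁, ⟨LinearEquiv.refl _ _⟩⟩
    obtain ⟨a₂, b₂, ⟨e₂⟩⟩ := key _ h₂ ⟨p₂, q₂, ⟨LinearEquiv.refl _ _⟩⟩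
    haveI := h₁; haveI := h₂
    obtain ⟨e⟩ := hiso a₁ a₂ b₁ b₂ (IsSimpleModule.congr e₁.symm) (IsSimpleModule.congr e₂.symm)
    exact ⟨e₁.trans (e.trans e₂.symm)⟩
  exact hmax P ⟨hNN'.trans hN'P, hPiso⟩ (lt_of_le_of_ne hN'P (Ne.symm hne))
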